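/- The dimension-4 perfect code generation matrix G is unitary: Gᴴ·G = I. -/

import Mathlib

open Matrix Complex Real

/-- `θ₁ = 2cos(4π/15)`, `θ₂ = 2cos(2π/15)`, `θ₃ = 2cos(16π/15)`, `θ₄ = 2cos(8π/15)`. -/
noncomputable def theta4 : Fin 4 → ℝ :=
  ![2 * Real.cos (4 * Real.pi / 15), 2 * Real.cos (2 * Real.pi / 15),
    2 * Real.cos (16 * Real.pi / 15), 2 * Real.cos (8 * Real.pi / 15)]

/-- The dimension-4 perfect code generation matrix. -/
noncomputable def perfectG4 : Matrix (Fin 4) (Fin 4) ℂ :=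
  Matrix.of fun u v =>
    (1 / (Real.sqrt 15 : ℂ)) *
      (![1 + Complex.I * ((theta4 u : ℂ) ^ 2 - 3),
         (theta4 u : ℂ) + Complex.I * ((theta4 u : ℂ) ^ 3 - 3 * (theta4 u : ℂ)),
         ((theta4 u : ℂ) ^ 3 - 3 * (theta4 u : ℂ)) +
           Complex.I * (-1 + 4 * (theta4 u : ℂ) - (theta4 u : ℂ) ^ 3),
         (-1 - 3 * (theta4 u : ℂ) + (theta4 u : ℂ) ^ 2 + (theta4 u : ℂ) ^ 3) + Complex.I] v)

set_option maxHeartbeats 1000000 in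
/-- The dimension-4 perfect code generation matrix is unitary: `Gᴴ G = I`. -/
theorem stmt13 : perfectG4ᴴ * perfectG4 = 1 := by
  have hsq : ((Real.sqrt 15 : ℝ) : ℂ)⁻¹ * ((Real.sqrt 15 : ℝ) : ℂ)⁻¹ = 1 / 15 := by
    rw [← mul_inv]
    norm_cast
    rw [Real.mul_self_sqrt (by norm_num)]
    norm_num
  have hI : (Complex.I) ^ 2 = -1 := Complex.I_sq
  set z : ℂ := Complex.exp (2 * π * Complex.I / 15) with hzdef
  have hzpow : ∀ n : ℕ, z ^ n = Complex.exp (n * (2 * π * Complex.I / 15)) := fun n => by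
    rw [Complex.exp_nat_mul]
  have hz15 : z ^ 15 = 1 := by
    rw [hzpow, show ((15:ℕ):ℂ) * (2 * π * Complex.I / 15) = 2 * π * Complex.I by push_cast; ring,
      Complex.exp_two_pi_mul_I]
  have hne : (2 * (π:ℂ) * Complex.I) ≠ 0 := by
    refine mul_ne_zero (mul_ne_zero two_ne_zero ?_) Complex.I_ne_zero
    exact_mod_cast Complex.ofReal_ne_zero.mpr Real.pi_ne_zero
  have hz3 : z ^ 3 ≠ 1 := by
    rw [hzpow]
    intro h
    rw [Complex.exp_eq_one_iff] at h
    obtain ⟨n, hn⟩ := h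
    have h2 : (3 : ℂ) * (2 * π * Complex.I) = ((n * 15 : ℤ) : ℂ) * (2 * π * Complex.I) := by
      push_cast
      linear_combination (15:ℂ) * hn
    have h3 : (3 : ℂ) = ((n * 15 : ℤ) : ℂ) := mul_right_cancel₀ hne h2
    have : (3 : ℤ) = n * 15 := by exact_mod_cast h3
    omega
  have hz5 : z ^ 5 ≠ 1 := by
    rw [hzpow]
    intro h
    rw [Complex.exp_eq_one_iff] at h
    obtain ⟨n, hn⟩ := h
    have h2 : (5 : ℂ) * (2 * π * Complex.I) = ((n * 15 : ℤ) : ℂ) * (2 * π * Complex.I) := by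
      push_cast
      linear_combination (15:ℂ) * hn
    have h3 : (5 : ℂ) = ((n * 15 : ℤ) : ℂ) := mul_right_cancel₀ hne h2
    have : (5 : ℤ) = n * 15 := by exact_mod_cast h3
    omega
  have hPhi : z ^ 8 - z ^ 7 + z ^ 5 - z ^ 4 + z ^ 3 - z + 1 = 0 := by
    have key : (z ^ 8 - z ^ 7 + z ^ 5 - z ^ 4 + z ^ 3 - z + 1) * ((z ^ 5 - 1) * (z ^ 3 - 1)) =
        (z ^ 15 - 1) * (z - 1) := by ring
    rw [hz15, sub_self, zero_mul] at key
    rcases mul_eq_zero.mp key with h | h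
    · exact h
    · rcases mul_eq_zero.mp h with h' | h'
      · exact absurd (sub_eq_zero.mp h') hz5
      · exact absurd (sub_eq_zero.mp h') hz3
  have hth : ∀ (u : Fin 4) (k : ℕ), k < 15 → theta4 u = 2 * Real.cos (2 * k * π / 15) →
      ((theta4 u : ℝ) : ℂ) = z ^ k + z ^ (15 - k) := by
    intro u k hk ht
    have e1 : z ^ k = Complex.exp ((↑(2 * k * π / 15) : ℂ) * Complex.I) := by
      rw [hzpow]; congr 1; push_cast; ring
    have e2 : z ^ (15 - k) = Complex.exp (-(↑(2 * k * π / 15) : ℂ) * Complex.I) := by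
      rw [hzpow, show (((15 - k : ℕ)) : ℂ) * (2 * π * Complex.I / 15) =
          -(↑(2 * k * π / 15) : ℂ) * Complex.I + 2 * π * Complex.I by
        have : ((15 - k : ℕ) : ℂ) = 15 - (k : ℂ) := by
          push_cast [Nat.cast_sub hk.le]; ring
        rw [this]; push_cast; ring,
        Complex.exp_add, Complex.exp_two_pi_mul_I, mul_one]
    rw [e1, e2, ← Complex.two_cos, ht]
    push_cast [Complex.ofReal_cos]
    ring
  have h0 : ((theta4 0 : ℝ) : ℂ) = z ^ 2 + z ^ 13 := by
    refine hth 0 2 (by norm_num) ?_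
    norm_num [theta4]
  have h1 : ((theta4 1 : ℝ) : ℂ) = z ^ 1 + z ^ 14 := by
    refine hth 1 1 (by norm_num) ?_
    norm_num [theta4]
  have h2 : ((theta4 2 : ℝ) : ℂ) = z ^ 8 + z ^ 7 := by
    refine hth 2 8 (by norm_num) ?_
    norm_num [theta4]
    rfl
  have h3 : ((theta4 3 : ℝ) : ℂ) = z ^ 4 + z ^ 11 := by
    refine hth 3 4 (by norm_num) ?_
    norm_num [theta4]
    rfl
  ext i j
  fin_cases i <;> fin_cases j <;>
    simp [Matrix.mul_apply, Matrix.conjTranspose_apply, perfectG4, Fin.sum_univ_four,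
      Matrix.one_apply] <;>
    rw [h0, h1, h2, h3]
  · linear_combination (((-36:ℂ) + (6:ℂ)*z^2 + (5:ℂ)*z^4 + (5:ℂ)*z^8 + (6:ℂ)*z^14 + (48:ℂ)*z^15 + (5:ℂ)*z^16 + (-4:ℂ)*z^17 + (-4:ℂ)*z^19 + (6:ℂ)*z^22 + (-4:ℂ)*z^23 + (6:ℂ)*z^26 + (5:ℂ)*z^28 + (-4:ℂ)*z^29 + (-24:ℂ)*z^30 + (-4:ℂ)*z^31 + (-1:ℂ)*z^32 + (-4:ℂ)*z^37 + (-4:ℂ)*z^41 + (-4:ℂ)*z^43 + (-1:ℂ)*z^44 + (-1:ℂ)*z^52 + (-1:ℂ)*z^56)*((((Real.sqrt 15:ℝ):ℂ))⁻¹*(((Real.sqrt 15:ℝ):ℂ))⁻¹)) * hI + ((((-24:ℂ) + (-1:ℂ)*z + (5:ℂ)*z^2 + (4:ℂ)*z^4 + (-1:ℂ)*z^7 + (4:ℂ)*z^8 + (-1:ℂ)*z^11 + (-1:ℂ)*z^13 + (5:ℂ)*z^14 + (24:ℂ)*z^15 + (4:ℂ)*z^16 + (1:ℂ)*z^17 +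 (5:ℂ)*z^22 + (5:ℂ)*z^26 + (4:ℂ)*z^28 + (1:ℂ)*z^29 + (1:ℂ)*z^37 + (1:ℂ)*z^41) + (0:ℂ)*Complex.I)*((((Real.sqrt 15:ℝ):ℂ))⁻¹*(((Real.sqrt 15:ℝ):ℂ))⁻¹)) * hz15 + ((((1:ℂ) + (-1:ℂ)*z^2 + (-2:ℂ)*z^3 + (-2:ℂ)*z^4 + (-2:ℂ)*z^5 + (-1:ℂ)*z^6) + (0:ℂ)*Complex.I)*((((Real.sqrt 15:ℝ):ℂ))⁻¹*(((Real.sqrt 15:ℝ):ℂ))⁻¹)) * hPhi + (15:ℂ) * hsq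
  · linear_combination (((-9:ℂ)*z + (-9:ℂ)*z^2 + (6:ℂ)*z^3 + (-9:ℂ)*z^4 + (-1:ℂ)*z^5 + (6:ℂ)*z^6 + (-9:ℂ)*z^7 + (-9:ℂ)*z^8 + (-1:ℂ)*z^10 + (-9:ℂ)*z^11 + (6:ℂ)*z^12 + (-9:ℂ)*z^13 + (-9:ℂ)*z^14 + (18:ℂ)*z^16 + (18:ℂ)*z^17 + (-5:ℂ)*z^18 + (18:ℂ)*z^19 + (-1:ℂ)*z^20 + (1:ℂ)*z^21 + (18:ℂ)*z^22 + (18:ℂ)*z^23 + (6:ℂ)*z^24 + (18:ℂ)*z^26 + (-5:ℂ)*z^27 + (18:ℂ)*z^28 + (18:ℂ)*z^29 + (-10:ℂ)*z^31 + (-10:ℂ)*z^32 + (6:ℂ)*z^33 + (-10:ℂ)*z^34 + (-1:ℂ)*z^35 + (-5:ℂ)*z^36 + (-10:ℂ)*z^37 + (-10:ℂ)*z^38 + (1:ℂ)*z^39 + (-1:ℂ)*z^40 + (-10:ℂ)*z^41 + (6:ℂ)*z^42 + (-10:ℂ)*z^43 + (-10:ℂ)*z^44 + (-5:ℂ)*z^48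 + (-5:ℂ)*z^54 + (-1:ℂ)*z^55 + (-5:ℂ)*z^57 + (-1:ℂ)*z^65 + (-1:ℂ)*z^70)*((((Real.sqrt 15:ℝ):ℂ))⁻¹*(((Real.sqrt 15:ℝ):ℂ))⁻¹)) * hI + ((((-8:ℂ)*z + (-8:ℂ)*z^2 + (4:ℂ)*z^3 + (-8:ℂ)*z^4 + (3:ℂ)*z^5 + (4:ℂ)*z^6 + (-8:ℂ)*z^7 + (-8:ℂ)*z^8 + (-2:ℂ)*z^9 + (3:ℂ)*z^10 + (-8:ℂ)*z^11 + (4:ℂ)*z^12 + (-8:ℂ)*z^13 + (-8:ℂ)*z^14 + (10:ℂ)*z^16 + (10:ℂ)*z^17 + (-1:ℂ)*z^18 + (10:ℂ)*z^19 + (2:ℂ)*z^20 + (5:ℂ)*z^21 + (10:ℂ)*z^22 + (10:ℂ)*z^23 + (4:ℂ)*z^24 + (3:ℂ)*z^25 + (10:ℂ)*z^26 + (-1:ℂ)*z^27 + (10:ℂ)*z^28 + (10:ℂ)*z^29 + (5:ℂ)*z^33 + (1:ℂ)*z^35 + (5:ℂ)*z^39 + (2:ℂ)*z^40 + (5:ℂ)*z^42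 + (1:ℂ)*z^50 + (1:ℂ)*z^55) + (0:ℂ)*Complex.I)*((((Real.sqrt 15:ℝ):ℂ))⁻¹*(((Real.sqrt 15:ℝ):ℂ))⁻¹)) * hz15 + ((((2:ℂ)*z + (4:ℂ)*z^2 + (2:ℂ)*z^3 + (2:ℂ)*z^4 + (4:ℂ)*z^5 + (2:ℂ)*z^6) + (0:ℂ)*Complex.I)*((((Real.sqrt 15:ℝ):ℂ))⁻¹*(((Real.sqrt 15:ℝ):ℂ))⁻¹)) * hPhi + (0:ℂ) * hsq
  · linear_combination (((-12:ℂ) + (12:ℂ)*z + (13:ℂ)*z^2 + (-7:ℂ)*z^3 + (13:ℂ)*z^4 + (1:ℂ)*z^5 + (-7:ℂ)*z^6 + (12:ℂ)*z^7 + (13:ℂ)*z^8 + (1:ℂ)*z^10 + (12:ℂ)*z^11 + (-7:ℂ)*z^12 + (12:ℂ)*z^13 + (13:ℂ)*z^14 + (8:ℂ)*z^15 + (-20:ℂ)*z^16 + (-21:ℂ)*z^17 + (5:ℂ)*z^18 + (-21:ℂ)*z^19 + (1:ℂ)*z^20 + (-2:ℂ)*z^21 + (-20:ℂ)*z^22 +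 (-21:ℂ)*z^23 + (-7:ℂ)*z^24 + (-20:ℂ)*z^26 + (5:ℂ)*z^27 + (-20:ℂ)*z^28 + (-21:ℂ)*z^29 + (10:ℂ)*z^31 + (10:ℂ)*z^32 + (-7:ℂ)*z^33 + (10:ℂ)*z^34 + (1:ℂ)*z^35 + (5:ℂ)*z^36 + (10:ℂ)*z^37 + (10:ℂ)*z^38 + (-2:ℂ)*z^39 + (1:ℂ)*z^40 + (10:ℂ)*z^41 + (-7:ℂ)*z^42 + (10:ℂ)*z^43 + (10:ℂ)*z^44 + (5:ℂ)*z^48 + (5:ℂ)*z^54 + (1:ℂ)*z^55 + (5:ℂ)*z^57 + (1:ℂ)*z^65 + (1:ℂ)*z^70)*((((Real.sqrt 15:ℝ):ℂ))⁻¹*(((Real.sqrt 15:ℝ):ℂ))⁻¹)) * hI + ((((-8:ℂ) + (13:ℂ)*z + (14:ℂ)*z^2 + (-2:ℂ)*z^3 + (14:ℂ)*z^4 + (-3:ℂ)*z^5 + (-2:ℂ)*z^6 + (13:ℂ)*z^7 + (14:ℂ)*z^8 + (6:ℂ)*z^9 + (-3:ℂ)*z^10 + (13:ℂ)*z^11 +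 (-2:ℂ)*z^12 + (13:ℂ)*z^13 + (14:ℂ)*z^14 + (-10:ℂ)*z^16 + (-10:ℂ)*z^17 + (3:ℂ)*z^18 + (-10:ℂ)*z^19 + (-2:ℂ)*z^20 + (-5:ℂ)*z^21 + (-10:ℂ)*z^22 + (-10:ℂ)*z^23 + (-2:ℂ)*z^24 + (-3:ℂ)*z^25 + (-10:ℂ)*z^26 + (3:ℂ)*z^27 + (-10:ℂ)*z^28 + (-10:ℂ)*z^29 + (-5:ℂ)*z^33 + (-1:ℂ)*z^35 + (-5:ℂ)*z^39 + (-2:ℂ)*z^40 + (-5:ℂ)*z^42 + (-1:ℂ)*z^50 + (-1:ℂ)*z^55) + ((5:ℂ)*z + (5:ℂ)*z^2 + (-5:ℂ)*z^3 + (5:ℂ)*z^4 + (-3:ℂ)*z^5 + (-5:ℂ)*z^6 + (5:ℂ)*z^7 + (5:ℂ)*z^8 + (-3:ℂ)*z^10 + (5:ℂ)*z^11 + (-5:ℂ)*z^12 + (5:ℂ)*z^13 + (5:ℂ)*z^14 + (-10:ℂ)*z^16 + (-10:ℂ)*z^17 + (-10:ℂ)*z^19 + (-2:ℂ)*z^20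 + (-5:ℂ)*z^21 + (-10:ℂ)*z^22 + (-10:ℂ)*z^23 + (-5:ℂ)*z^24 + (-3:ℂ)*z^25 + (-10:ℂ)*z^26 + (-10:ℂ)*z^28 + (-10:ℂ)*z^29 + (-5:ℂ)*z^33 + (-1:ℂ)*z^35 + (-5:ℂ)*z^39 + (-2:ℂ)*z^40 + (-5:ℂ)*z^42 + (-1:ℂ)*z^50 + (-1:ℂ)*z^55)*Complex.I)*((((Real.sqrt 15:ℝ):ℂ))⁻¹*(((Real.sqrt 15:ℝ):ℂ))⁻¹)) * hz15 + ((((4:ℂ) + (2:ℂ)*z + (2:ℂ)*z^3 + (2:ℂ)*z^4 + (-4:ℂ)*z^5 + (-2:ℂ)*z^6) + ((-4:ℂ) + (-4:ℂ)*z + (-4:ℂ)*z^2)*Complex.I)*((((Real.sqrt 15:ℝ):ℂ))⁻¹*(((Real.sqrt 15:ℝ):ℂ))⁻¹)) * hPhi + (0:ℂ) * hsq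
  · linear_combination (((12:ℂ) + (-1:ℂ)*z^2 + (-1:ℂ)*z^4 + (-1:ℂ)*z^8 + (-1:ℂ)*z^14 + (-8:ℂ)*z^15 + (-1:ℂ)*z^16 + (-1:ℂ)*z^22 + (-1:ℂ)*z^26 + (-1:ℂ)*z^28)*((((Real.sqrt 15:ℝ):ℂ))⁻¹*(((Real.sqrt 15:ℝ):ℂ))⁻¹)) * hI + ((((16:ℂ) + (5:ℂ)*z + (3:ℂ)*z^2 + (1:ℂ)*z^3 + (3:ℂ)*z^4 + (1:ℂ)*z^6 + (5:ℂ)*z^7 + (3:ℂ)*z^8 + (2:ℂ)*z^9 + (5:ℂ)*z^11 + (1:ℂ)*z^12 + (5:ℂ)*z^13 + (3:ℂ)*z^14 + (1:ℂ)*z^18 + (1:ℂ)*z^24 + (1:ℂ)*z^27) + ((8:ℂ) + (7:ℂ)*z + (3:ℂ)*z^2 + (-4:ℂ)*z^3 + (4:ℂ)*z^4 + (-3:ℂ)*z^5 + (-4:ℂ)*z^6 + (7:ℂ)*z^7 + (4:ℂ)*z^8 + (2:ℂ)*z^9 + (-3:ℂ)*z^10 + (7:ℂ)*z^11 + (-4:ℂ)*z^12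 + (7:ℂ)*z^13 + (3:ℂ)*z^14 + (-24:ℂ)*z^15 + (-14:ℂ)*z^16 + (-11:ℂ)*z^17 + (1:ℂ)*z^18 + (-10:ℂ)*z^19 + (-2:ℂ)*z^20 + (-5:ℂ)*z^21 + (-15:ℂ)*z^22 + (-10:ℂ)*z^23 + (-4:ℂ)*z^24 + (-3:ℂ)*z^25 + (-15:ℂ)*z^26 + (1:ℂ)*z^27 + (-14:ℂ)*z^28 + (-11:ℂ)*z^29 + (-5:ℂ)*z^33 + (-1:ℂ)*z^35 + (-1:ℂ)*z^37 + (-5:ℂ)*z^39 + (-2:ℂ)*z^40 + (-1:ℂ)*z^41 + (-5:ℂ)*z^42 + (-1:ℂ)*z^50 + (-1:ℂ)*z^55)*Complex.I)*((((Real.sqrt 15:ℝ):ℂ))⁻¹*(((Real.sqrt 15:ℝ):ℂ))⁻¹)) * hz15 + ((((2:ℂ)*z + (4:ℂ)*z^2 + (6:ℂ)*z^3 + (6:ℂ)*z^4 + (4:ℂ)*z^5 + (2:ℂ)*z^6) + ((-2:ℂ)*z + (-4:ℂ)*z^2 + (-2:ℂ)*z^3 + (-2:ℂ)*z^4 + (-4:ℂ)*z^5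 + (-2:ℂ)*z^6)*Complex.I)*((((Real.sqrt 15:ℝ):ℂ))⁻¹*(((Real.sqrt 15:ℝ):ℂ))⁻¹)) * hPhi + (0:ℂ) * hsq
  · linear_combination (((-9:ℂ)*z + (-9:ℂ)*z^2 + (6:ℂ)*z^3 + (-9:ℂ)*z^4 + (-1:ℂ)*z^5 + (6:ℂ)*z^6 + (-9:ℂ)*z^7 + (-9:ℂ)*z^8 + (-1:ℂ)*z^10 + (-9:ℂ)*z^11 + (6:ℂ)*z^12 + (-9:ℂ)*z^13 + (-9:ℂ)*z^14 + (18:ℂ)*z^16 + (18:ℂ)*z^17 + (-5:ℂ)*z^18 + (18:ℂ)*z^19 + (-1:ℂ)*z^20 + (1:ℂ)*z^21 + (18:ℂ)*z^22 + (18:ℂ)*z^23 + (6:ℂ)*z^24 + (18:ℂ)*z^26 + (-5:ℂ)*z^27 + (18:ℂ)*z^28 + (18:ℂ)*z^29 + (-10:ℂ)*z^31 + (-10:ℂ)*z^32 + (6:ℂ)*z^33 + (-10:ℂ)*z^34 + (-1:ℂ)*z^35 + (-5:ℂ)*z^36 + (-10:ℂ)*z^37 + (-10:ℂ)*z^38 +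 (1:ℂ)*z^39 + (-1:ℂ)*z^40 + (-10:ℂ)*z^41 + (6:ℂ)*z^42 + (-10:ℂ)*z^43 + (-10:ℂ)*z^44 + (-5:ℂ)*z^48 + (-5:ℂ)*z^54 + (-1:ℂ)*z^55 + (-5:ℂ)*z^57 + (-1:ℂ)*z^65 + (-1:ℂ)*z^70)*((((Real.sqrt 15:ℝ):ℂ))⁻¹*(((Real.sqrt 15:ℝ):ℂ))⁻¹)) * hI + ((((-8:ℂ)*z + (-8:ℂ)*z^2 + (4:ℂ)*z^3 + (-8:ℂ)*z^4 + (3:ℂ)*z^5 + (4:ℂ)*z^6 + (-8:ℂ)*z^7 + (-8:ℂ)*z^8 + (-2:ℂ)*z^9 + (3:ℂ)*z^10 + (-8:ℂ)*z^11 + (4:ℂ)*z^12 + (-8:ℂ)*z^13 + (-8:ℂ)*z^14 + (10:ℂ)*z^16 + (10:ℂ)*z^17 + (-1:ℂ)*z^18 + (10:ℂ)*z^19 + (2:ℂ)*z^20 + (5:ℂ)*z^21 + (10:ℂ)*z^22 + (10:ℂ)*z^23 + (4:ℂ)*z^24 + (3:ℂ)*z^25 + (10:ℂ)*z^26 + (-1:ℂ)*z^27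 + (10:ℂ)*z^28 + (10:ℂ)*z^29 + (5:ℂ)*z^33 + (1:ℂ)*z^35 + (5:ℂ)*z^39 + (2:ℂ)*z^40 + (5:ℂ)*z^42 + (1:ℂ)*z^50 + (1:ℂ)*z^55) + (0:ℂ)*Complex.I)*((((Real.sqrt 15:ℝ):ℂ))⁻¹*(((Real.sqrt 15:ℝ):ℂ))⁻¹)) * hz15 + ((((2:ℂ)*z + (4:ℂ)*z^2 + (2:ℂ)*z^3 + (2:ℂ)*z^4 + (4:ℂ)*z^5 + (2:ℂ)*z^6) + (0:ℂ)*Complex.I)*((((Real.sqrt 15:ℝ):ℂ))⁻¹*(((Real.sqrt 15:ℝ):ℂ))⁻¹)) * hPhi + (0:ℂ) * hsq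
  · linear_combination (((-9:ℂ)*z^2 + (-3:ℂ)*z^4 + (-1:ℂ)*z^6 + (-3:ℂ)*z^8 + (-1:ℂ)*z^12 + (-9:ℂ)*z^14 + (-72:ℂ)*z^15 + (-3:ℂ)*z^16 + (24:ℂ)*z^17 + (18:ℂ)*z^19 + (-9:ℂ)*z^22 + (18:ℂ)*z^23 + (-1:ℂ)*z^24 + (-9:ℂ)*z^26 + (-3:ℂ)*z^28 + (24:ℂ)*z^29 + (144:ℂ)*z^30 + (18:ℂ)*z^31 + (-9:ℂ)*z^32 + (-15:ℂ)*z^34 + (24:ℂ)*z^37 + (-15:ℂ)*z^38 + (24:ℂ)*z^41 + (-1:ℂ)*z^42 + (18:ℂ)*z^43 + (-9:ℂ)*z^44 + (-80:ℂ)*z^45 + (-15:ℂ)*z^46 + (-6:ℂ)*z^47 + (-1:ℂ)*z^48 + (-9:ℂ)*z^52 + (-9:ℂ)*z^56 + (-15:ℂ)*z^58 + (-6:ℂ)*z^59 + (-1:ℂ)*z^66 + (-6:ℂ)*z^67 + (-6:ℂ)*z^71 + (-1:ℂ)*z^78 + (-1:ℂ)*z^84)*((((Real.sqrt 15:ℝ):ℂ))⁻¹*(((Real.sqrt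 15:ℝ):ℂ))⁻¹)) * hI + ((((16:ℂ) + (1:ℂ)*z + (-9:ℂ)*z^2 + (2:ℂ)*z^3 + (-3:ℂ)*z^4 + (1:ℂ)*z^6 + (1:ℂ)*z^7 + (-3:ℂ)*z^8 + (2:ℂ)*z^9 + (1:ℂ)*z^11 + (1:ℂ)*z^12 + (1:ℂ)*z^13 + (-9:ℂ)*z^14 + (-64:ℂ)*z^15 + (-3:ℂ)*z^16 + (15:ℂ)*z^17 + (2:ℂ)*z^18 + (15:ℂ)*z^19 + (1:ℂ)*z^21 + (-9:ℂ)*z^22 + (15:ℂ)*z^23 + (1:ℂ)*z^24 + (-9:ℂ)*z^26 + (1:ℂ)*z^27 + (-3:ℂ)*z^28 + (15:ℂ)*z^29 + (80:ℂ)*z^30 + (15:ℂ)*z^31 + (6:ℂ)*z^32 + (2:ℂ)*z^33 + (1:ℂ)*z^36 + (15:ℂ)*z^37 + (1:ℂ)*z^39 + (15:ℂ)*z^41 + (15:ℂ)*z^43 + (6:ℂ)*z^44 + (1:ℂ)*z^48 + (1:ℂ)*z^51 + (6:ℂ)*z^52 + (1:ℂ)*z^54 + (6:ℂ)*z^56 +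 (1:ℂ)*z^63 + (1:ℂ)*z^69) + (0:ℂ)*Complex.I)*((((Real.sqrt 15:ℝ):ℂ))⁻¹*(((Real.sqrt 15:ℝ):ℂ))⁻¹)) * hz15 + ((((1:ℂ) + (2:ℂ)*z + (3:ℂ)*z^2 + (4:ℂ)*z^3 + (4:ℂ)*z^4 + (2:ℂ)*z^5 + (1:ℂ)*z^6) + (0:ℂ)*Complex.I)*((((Real.sqrt 15:ℝ):ℂ))⁻¹*(((Real.sqrt 15:ℝ):ℂ))⁻¹)) * hPhi + (15:ℂ) * hsq
  · linear_combination (((-3:ℂ)*z + (9:ℂ)*z^2 + (1:ℂ)*z^3 + (2:ℂ)*z^4 + (2:ℂ)*z^6 + (-3:ℂ)*z^7 + (2:ℂ)*z^8 + (-3:ℂ)*z^11 + (2:ℂ)*z^12 + (-3:ℂ)*z^13 + (9:ℂ)*z^14 + (96:ℂ)*z^15 + (8:ℂ)*z^16 + (-25:ℂ)*z^17 + (-19:ℂ)*z^19 + (1:ℂ)*z^21 + (15:ℂ)*z^22 + (-19:ℂ)*z^23 + (2:ℂ)*z^24 + (15:ℂ)*z^26 + (8:ℂ)*z^28 + (-25:ℂ)*z^29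 + (-168:ℂ)*z^30 + (-22:ℂ)*z^31 + (8:ℂ)*z^32 + (1:ℂ)*z^33 + (15:ℂ)*z^34 + (-28:ℂ)*z^37 + (15:ℂ)*z^38 + (1:ℂ)*z^39 + (-28:ℂ)*z^41 + (2:ℂ)*z^42 + (-22:ℂ)*z^43 + (8:ℂ)*z^44 + (80:ℂ)*z^45 + (15:ℂ)*z^46 + (6:ℂ)*z^47 + (1:ℂ)*z^48 + (8:ℂ)*z^52 + (8:ℂ)*z^56 + (15:ℂ)*z^58 + (6:ℂ)*z^59 + (1:ℂ)*z^66 + (6:ℂ)*z^67 + (6:ℂ)*z^71 + (1:ℂ)*z^78 + (1:ℂ)*z^84)*((((Real.sqrt 15:ℝ):ℂ))⁻¹*(((Real.sqrt 15:ℝ):ℂ))⁻¹)) * hI + ((((-8:ℂ) + (1:ℂ)*z + (16:ℂ)*z^2 + (-3:ℂ)*z^3 + (8:ℂ)*z^4 + (-2:ℂ)*z^6 + (1:ℂ)*z^7 + (8:ℂ)*z^8 + (-4:ℂ)*z^9 + (1:ℂ)*z^11 + (-2:ℂ)*z^12 + (1:ℂ)*z^13 + (16:ℂ)*z^14 + (112:ℂ)*z^15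 + (11:ℂ)*z^16 + (-13:ℂ)*z^17 + (-3:ℂ)*z^18 + (-15:ℂ)*z^19 + (-1:ℂ)*z^21 + (19:ℂ)*z^22 + (-15:ℂ)*z^23 + (-2:ℂ)*z^24 + (19:ℂ)*z^26 + (-2:ℂ)*z^27 + (11:ℂ)*z^28 + (-13:ℂ)*z^29 + (-80:ℂ)*z^30 + (-15:ℂ)*z^31 + (-6:ℂ)*z^32 + (-2:ℂ)*z^33 + (-1:ℂ)*z^36 + (-13:ℂ)*z^37 + (-1:ℂ)*z^39 + (-13:ℂ)*z^41 + (-15:ℂ)*z^43 + (-6:ℂ)*z^44 + (-1:ℂ)*z^48 + (-1:ℂ)*z^51 + (-6:ℂ)*z^52 + (-1:ℂ)*z^54 + (-6:ℂ)*z^56 + (-1:ℂ)*z^63 + (-1:ℂ)*z^69) + ((-1:ℂ)*z + (4:ℂ)*z^2 + (-2:ℂ)*z^3 + (-1:ℂ)*z^4 + (-1:ℂ)*z^6 + (-1:ℂ)*z^7 + (-1:ℂ)*z^8 + (-2:ℂ)*z^9 + (-1:ℂ)*z^11 + (-1:ℂ)*z^12 + (-1:ℂ)*z^13 + (4:ℂ)*z^14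 + (40:ℂ)*z^15 + (-1:ℂ)*z^16 + (-16:ℂ)*z^17 + (-2:ℂ)*z^18 + (-15:ℂ)*z^19 + (-1:ℂ)*z^21 + (4:ℂ)*z^22 + (-15:ℂ)*z^23 + (-1:ℂ)*z^24 + (4:ℂ)*z^26 + (-1:ℂ)*z^27 + (-1:ℂ)*z^28 + (-16:ℂ)*z^29 + (-80:ℂ)*z^30 + (-15:ℂ)*z^31 + (-6:ℂ)*z^32 + (-2:ℂ)*z^33 + (-1:ℂ)*z^36 + (-16:ℂ)*z^37 + (-1:ℂ)*z^39 + (-16:ℂ)*z^41 + (-15:ℂ)*z^43 + (-6:ℂ)*z^44 + (-1:ℂ)*z^48 + (-1:ℂ)*z^51 + (-6:ℂ)*z^52 + (-1:ℂ)*z^54 + (-6:ℂ)*z^56 + (-1:ℂ)*z^63 + (-1:ℂ)*z^69)*Complex.I)*((((Real.sqrt 15:ℝ):ℂ))⁻¹*(((Real.sqrt 15:ℝ):ℂ))⁻¹)) * hz15 + ((((-8:ℂ) + (-4:ℂ)*z + (4:ℂ)*z^3 + (4:ℂ)*z^4 + (8:ℂ)*z^5 + (4:ℂ)*z^6) + ((-2:ℂ)*z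 + (-4:ℂ)*z^2 + (-6:ℂ)*z^3 + (-6:ℂ)*z^4 + (-4:ℂ)*z^5 + (-2:ℂ)*z^6)*Complex.I)*((((Real.sqrt 15:ℝ):ℂ))⁻¹*(((Real.sqrt 15:ℝ):ℂ))⁻¹)) * hPhi + (0:ℂ) * hsq
  · linear_combination (((3:ℂ)*z + (3:ℂ)*z^2 + (-1:ℂ)*z^3 + (3:ℂ)*z^4 + (-1:ℂ)*z^6 + (3:ℂ)*z^7 + (3:ℂ)*z^8 + (3:ℂ)*z^11 + (-1:ℂ)*z^12 + (3:ℂ)*z^13 + (3:ℂ)*z^14 + (-3:ℂ)*z^16 + (-3:ℂ)*z^17 + (-3:ℂ)*z^19 + (-1:ℂ)*z^21 + (-3:ℂ)*z^22 + (-3:ℂ)*z^23 + (-1:ℂ)*z^24 + (-3:ℂ)*z^26 + (-3:ℂ)*z^28 + (-3:ℂ)*z^29 + (-1:ℂ)*z^33 + (-1:ℂ)*z^39 + (-1:ℂ)*z^42)*((((Real.sqrt 15:ℝ):ℂ))⁻¹*(((Real.sqrt 15:ℝ):ℂ))⁻¹)) * hI + ((((8:ℂ)*z + (11:ℂ)*z^2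 + (2:ℂ)*z^3 + (10:ℂ)*z^4 + (2:ℂ)*z^6 + (8:ℂ)*z^7 + (10:ℂ)*z^8 + (4:ℂ)*z^9 + (8:ℂ)*z^11 + (2:ℂ)*z^12 + (8:ℂ)*z^13 + (11:ℂ)*z^14 + (24:ℂ)*z^15 + (4:ℂ)*z^16 + (1:ℂ)*z^17 + (2:ℂ)*z^18 + (5:ℂ)*z^22 + (2:ℂ)*z^24 + (5:ℂ)*z^26 + (2:ℂ)*z^27 + (4:ℂ)*z^28 + (1:ℂ)*z^29 + (1:ℂ)*z^37 + (1:ℂ)*z^41) + ((-8:ℂ) + (2:ℂ)*z + (11:ℂ)*z^2 + (-8:ℂ)*z^3 + (5:ℂ)*z^4 + (-3:ℂ)*z^5 + (-7:ℂ)*z^6 + (2:ℂ)*z^7 + (5:ℂ)*z^8 + (-4:ℂ)*z^9 + (-3:ℂ)*z^10 + (2:ℂ)*z^11 + (-7:ℂ)*z^12 + (2:ℂ)*z^13 + (11:ℂ)*z^14 + (64:ℂ)*z^15 + (-7:ℂ)*z^16 + (-25:ℂ)*z^17 + (-3:ℂ)*z^18 + (-25:ℂ)*z^19 + (-2:ℂ)*z^20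 + (-6:ℂ)*z^21 + (-1:ℂ)*z^22 + (-25:ℂ)*z^23 + (-7:ℂ)*z^24 + (-3:ℂ)*z^25 + (-1:ℂ)*z^26 + (-2:ℂ)*z^27 + (-7:ℂ)*z^28 + (-25:ℂ)*z^29 + (-80:ℂ)*z^30 + (-15:ℂ)*z^31 + (-6:ℂ)*z^32 + (-7:ℂ)*z^33 + (-1:ℂ)*z^35 + (-1:ℂ)*z^36 + (-15:ℂ)*z^37 + (-6:ℂ)*z^39 + (-2:ℂ)*z^40 + (-15:ℂ)*z^41 + (-5:ℂ)*z^42 + (-15:ℂ)*z^43 + (-6:ℂ)*z^44 + (-1:ℂ)*z^48 + (-1:ℂ)*z^50 + (-1:ℂ)*z^51 + (-6:ℂ)*z^52 + (-1:ℂ)*z^54 + (-1:ℂ)*z^55 + (-6:ℂ)*z^56 + (-1:ℂ)*z^63 + (-1:ℂ)*z^69)*Complex.I)*((((Real.sqrt 15:ℝ):ℂ))⁻¹*(((Real.sqrt 15:ℝ):ℂ))⁻¹)) * hz15 + ((((4:ℂ)*z + (8:ℂ)*z^2 + (12:ℂ)*z^3 + (12:ℂ)*z^4 + (8:ℂ)*z^5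 + (4:ℂ)*z^6) + ((-8:ℂ) + (-8:ℂ)*z + (-8:ℂ)*z^2 + (-4:ℂ)*z^3 + (-4:ℂ)*z^4)*Complex.I)*((((Real.sqrt 15:ℝ):ℂ))⁻¹*(((Real.sqrt 15:ℝ):ℂ))⁻¹)) * hPhi + (0:ℂ) * hsq
  · linear_combination (((-12:ℂ) + (12:ℂ)*z + (13:ℂ)*z^2 + (-7:ℂ)*z^3 + (13:ℂ)*z^4 + (1:ℂ)*z^5 + (-7:ℂ)*z^6 + (12:ℂ)*z^7 + (13:ℂ)*z^8 + (1:ℂ)*z^10 + (12:ℂ)*z^11 + (-7:ℂ)*z^12 + (12:ℂ)*z^13 + (13:ℂ)*z^14 + (8:ℂ)*z^15 + (-20:ℂ)*z^16 + (-21:ℂ)*z^17 + (5:ℂ)*z^18 + (-21:ℂ)*z^19 + (1:ℂ)*z^20 + (-2:ℂ)*z^21 + (-20:ℂ)*z^22 + (-21:ℂ)*z^23 + (-7:ℂ)*z^24 + (-20:ℂ)*z^26 + (5:ℂ)*z^27 + (-20:ℂ)*z^28 + (-21:ℂ)*z^29 + (10:ℂ)*z^31 + (10:ℂ)*z^32 +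 (-7:ℂ)*z^33 + (10:ℂ)*z^34 + (1:ℂ)*z^35 + (5:ℂ)*z^36 + (10:ℂ)*z^37 + (10:ℂ)*z^38 + (-2:ℂ)*z^39 + (1:ℂ)*z^40 + (10:ℂ)*z^41 + (-7:ℂ)*z^42 + (10:ℂ)*z^43 + (10:ℂ)*z^44 + (5:ℂ)*z^48 + (5:ℂ)*z^54 + (1:ℂ)*z^55 + (5:ℂ)*z^57 + (1:ℂ)*z^65 + (1:ℂ)*z^70)*((((Real.sqrt 15:ℝ):ℂ))⁻¹*(((Real.sqrt 15:ℝ):ℂ))⁻¹)) * hI + ((((-8:ℂ) + (13:ℂ)*z + (14:ℂ)*z^2 + (-2:ℂ)*z^3 + (14:ℂ)*z^4 + (-3:ℂ)*z^5 + (-2:ℂ)*z^6 + (13:ℂ)*z^7 + (14:ℂ)*z^8 + (6:ℂ)*z^9 + (-3:ℂ)*z^10 + (13:ℂ)*z^11 + (-2:ℂ)*z^12 + (13:ℂ)*z^13 + (14:ℂ)*z^14 + (-10:ℂ)*z^16 + (-10:ℂ)*z^17 + (3:ℂ)*z^18 + (-10:ℂ)*z^19 + (-2:ℂ)*z^20 +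 (-5:ℂ)*z^21 + (-10:ℂ)*z^22 + (-10:ℂ)*z^23 + (-2:ℂ)*z^24 + (-3:ℂ)*z^25 + (-10:ℂ)*z^26 + (3:ℂ)*z^27 + (-10:ℂ)*z^28 + (-10:ℂ)*z^29 + (-5:ℂ)*z^33 + (-1:ℂ)*z^35 + (-5:ℂ)*z^39 + (-2:ℂ)*z^40 + (-5:ℂ)*z^42 + (-1:ℂ)*z^50 + (-1:ℂ)*z^55) + ((-5:ℂ)*z + (-5:ℂ)*z^2 + (5:ℂ)*z^3 + (-5:ℂ)*z^4 + (3:ℂ)*z^5 + (5:ℂ)*z^6 + (-5:ℂ)*z^7 + (-5:ℂ)*z^8 + (3:ℂ)*z^10 + (-5:ℂ)*z^11 + (5:ℂ)*z^12 + (-5:ℂ)*z^13 + (-5:ℂ)*z^14 + (10:ℂ)*z^16 + (10:ℂ)*z^17 + (10:ℂ)*z^19 + (2:ℂ)*z^20 + (5:ℂ)*z^21 + (10:ℂ)*z^22 + (10:ℂ)*z^23 + (5:ℂ)*z^24 + (3:ℂ)*z^25 + (10:ℂ)*z^26 + (10:ℂ)*z^28 + (10:ℂ)*z^29 + (5:ℂ)*z^33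 + (1:ℂ)*z^35 + (5:ℂ)*z^39 + (2:ℂ)*z^40 + (5:ℂ)*z^42 + (1:ℂ)*z^50 + (1:ℂ)*z^55)*Complex.I)*((((Real.sqrt 15:ℝ):ℂ))⁻¹*(((Real.sqrt 15:ℝ):ℂ))⁻¹)) * hz15 + ((((4:ℂ) + (2:ℂ)*z + (2:ℂ)*z^3 + (2:ℂ)*z^4 + (-4:ℂ)*z^5 + (-2:ℂ)*z^6) + ((4:ℂ) + (4:ℂ)*z + (4:ℂ)*z^2)*Complex.I)*((((Real.sqrt 15:ℝ):ℂ))⁻¹*(((Real.sqrt 15:ℝ):ℂ))⁻¹)) * hPhi + (0:ℂ) * hsq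
  · linear_combination (((-3:ℂ)*z + (9:ℂ)*z^2 + (1:ℂ)*z^3 + (2:ℂ)*z^4 + (2:ℂ)*z^6 + (-3:ℂ)*z^7 + (2:ℂ)*z^8 + (-3:ℂ)*z^11 + (2:ℂ)*z^12 + (-3:ℂ)*z^13 + (9:ℂ)*z^14 + (96:ℂ)*z^15 + (8:ℂ)*z^16 + (-25:ℂ)*z^17 + (-19:ℂ)*z^19 + (1:ℂ)*z^21 + (15:ℂ)*z^22 + (-19:ℂ)*z^23 + (2:ℂ)*z^24 + (15:ℂ)*z^26 + (8:ℂ)*z^28 + (-25:ℂ)*z^29 + (-168:ℂ)*z^30 + (-22:ℂ)*z^31 + (8:ℂ)*z^32 + (1:ℂ)*z^33 + (15:ℂ)*z^34 + (-28:ℂ)*z^37 + (15:ℂ)*z^38 + (1:ℂ)*z^39 + (-28:ℂ)*z^41 + (2:ℂ)*z^42 + (-22:ℂ)*z^43 + (8:ℂ)*z^44 + (80:ℂ)*z^45 + (15:ℂ)*z^46 + (6:ℂ)*z^47 + (1:ℂ)*z^48 + (8:ℂ)*z^52 + (8:ℂ)*z^56 + (15:ℂ)*z^58 + (6:ℂ)*z^59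 + (1:ℂ)*z^66 + (6:ℂ)*z^67 + (6:ℂ)*z^71 + (1:ℂ)*z^78 + (1:ℂ)*z^84)*((((Real.sqrt 15:ℝ):ℂ))⁻¹*(((Real.sqrt 15:ℝ):ℂ))⁻¹)) * hI + ((((-8:ℂ) + (1:ℂ)*z + (16:ℂ)*z^2 + (-3:ℂ)*z^3 + (8:ℂ)*z^4 + (-2:ℂ)*z^6 + (1:ℂ)*z^7 + (8:ℂ)*z^8 + (-4:ℂ)*z^9 + (1:ℂ)*z^11 + (-2:ℂ)*z^12 + (1:ℂ)*z^13 + (16:ℂ)*z^14 + (112:ℂ)*z^15 + (11:ℂ)*z^16 + (-13:ℂ)*z^17 + (-3:ℂ)*z^18 + (-15:ℂ)*z^19 + (-1:ℂ)*z^21 + (19:ℂ)*z^22 + (-15:ℂ)*z^23 + (-2:ℂ)*z^24 + (19:ℂ)*z^26 + (-2:ℂ)*z^27 + (11:ℂ)*z^28 + (-13:ℂ)*z^29 + (-80:ℂ)*z^30 + (-15:ℂ)*z^31 + (-6:ℂ)*z^32 + (-2:ℂ)*z^33 + (-1:ℂ)*z^36 + (-13:ℂ)*z^37 + (-1:ℂ)*z^39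 + (-13:ℂ)*z^41 + (-15:ℂ)*z^43 + (-6:ℂ)*z^44 + (-1:ℂ)*z^48 + (-1:ℂ)*z^51 + (-6:ℂ)*z^52 + (-1:ℂ)*z^54 + (-6:ℂ)*z^56 + (-1:ℂ)*z^63 + (-1:ℂ)*z^69) + ((1:ℂ)*z + (-4:ℂ)*z^2 + (2:ℂ)*z^3 + (1:ℂ)*z^4 + (1:ℂ)*z^6 + (1:ℂ)*z^7 + (1:ℂ)*z^8 + (2:ℂ)*z^9 + (1:ℂ)*z^11 + (1:ℂ)*z^12 + (1:ℂ)*z^13 + (-4:ℂ)*z^14 + (-40:ℂ)*z^15 + (1:ℂ)*z^16 + (16:ℂ)*z^17 + (2:ℂ)*z^18 + (15:ℂ)*z^19 + (1:ℂ)*z^21 + (-4:ℂ)*z^22 + (15:ℂ)*z^23 + (1:ℂ)*z^24 + (-4:ℂ)*z^26 + (1:ℂ)*z^27 + (1:ℂ)*z^28 + (16:ℂ)*z^29 + (80:ℂ)*z^30 + (15:ℂ)*z^31 + (6:ℂ)*z^32 + (2:ℂ)*z^33 + (1:ℂ)*z^36 + (16:ℂ)*z^37 + (1:ℂ)*z^39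 + (16:ℂ)*z^41 + (15:ℂ)*z^43 + (6:ℂ)*z^44 + (1:ℂ)*z^48 + (1:ℂ)*z^51 + (6:ℂ)*z^52 + (1:ℂ)*z^54 + (6:ℂ)*z^56 + (1:ℂ)*z^63 + (1:ℂ)*z^69)*Complex.I)*((((Real.sqrt 15:ℝ):ℂ))⁻¹*(((Real.sqrt 15:ℝ):ℂ))⁻¹)) * hz15 + ((((-8:ℂ) + (-4:ℂ)*z + (4:ℂ)*z^3 + (4:ℂ)*z^4 + (8:ℂ)*z^5 + (4:ℂ)*z^6) + ((2:ℂ)*z + (4:ℂ)*z^2 + (6:ℂ)*z^3 + (6:ℂ)*z^4 + (4:ℂ)*z^5 + (2:ℂ)*z^6)*Complex.I)*((((Real.sqrt 15:ℝ):ℂ))⁻¹*(((Real.sqrt 15:ℝ):ℂ))⁻¹)) * hPhi + (0:ℂ) * hsq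
  · linear_combination (((-4:ℂ) + (8:ℂ)*z + (-8:ℂ)*z^2 + (-2:ℂ)*z^3 + (-3:ℂ)*z^6 + (8:ℂ)*z^7 + (8:ℂ)*z^11 + (-3:ℂ)*z^12 + (8:ℂ)*z^13 + (-8:ℂ)*z^14 + (-128:ℂ)*z^15 + (-14:ℂ)*z^16 + (26:ℂ)*z^17 + (20:ℂ)*z^19 + (-2:ℂ)*z^21 + (-22:ℂ)*z^22 + (20:ℂ)*z^23 + (-3:ℂ)*z^24 + (-22:ℂ)*z^26 + (-14:ℂ)*z^28 + (26:ℂ)*z^29 + (192:ℂ)*z^30 + (26:ℂ)*z^31 + (-7:ℂ)*z^32 + (-2:ℂ)*z^33 + (-15:ℂ)*z^34 + (32:ℂ)*z^37 + (-15:ℂ)*z^38 + (-2:ℂ)*z^39 + (32:ℂ)*z^41 + (-3:ℂ)*z^42 + (26:ℂ)*z^43 + (-7:ℂ)*z^44 + (-80:ℂ)*z^45 + (-15:ℂ)*z^46 + (-6:ℂ)*z^47 + (-1:ℂ)*z^48 + (-7:ℂ)*z^52 + (-7:ℂ)*z^56 + (-15:ℂ)*z^58 + (-6:ℂ)*z^59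 + (-1:ℂ)*z^66 + (-6:ℂ)*z^67 + (-6:ℂ)*z^71 + (-1:ℂ)*z^78 + (-1:ℂ)*z^84)*((((Real.sqrt 15:ℝ):ℂ))⁻¹*(((Real.sqrt 15:ℝ):ℂ))⁻¹)) * hI + ((((24:ℂ) + (3:ℂ)*z + (-22:ℂ)*z^2 + (6:ℂ)*z^3 + (-8:ℂ)*z^4 + (4:ℂ)*z^6 + (3:ℂ)*z^7 + (-8:ℂ)*z^8 + (8:ℂ)*z^9 + (3:ℂ)*z^11 + (4:ℂ)*z^12 + (3:ℂ)*z^13 + (-22:ℂ)*z^14 + (-176:ℂ)*z^15 + (-14:ℂ)*z^16 + (28:ℂ)*z^17 + (6:ℂ)*z^18 + (30:ℂ)*z^19 + (2:ℂ)*z^21 + (-28:ℂ)*z^22 + (30:ℂ)*z^23 + (4:ℂ)*z^24 + (-28:ℂ)*z^26 + (4:ℂ)*z^27 + (-14:ℂ)*z^28 + (28:ℂ)*z^29 + (160:ℂ)*z^30 + (30:ℂ)*z^31 + (12:ℂ)*z^32 + (4:ℂ)*z^33 + (2:ℂ)*z^36 + (28:ℂ)*z^37 + (2:ℂ)*z^39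 + (28:ℂ)*z^41 + (30:ℂ)*z^43 + (12:ℂ)*z^44 + (2:ℂ)*z^48 + (2:ℂ)*z^51 + (12:ℂ)*z^52 + (2:ℂ)*z^54 + (12:ℂ)*z^56 + (2:ℂ)*z^63 + (2:ℂ)*z^69) + (0:ℂ)*Complex.I)*((((Real.sqrt 15:ℝ):ℂ))⁻¹*(((Real.sqrt 15:ℝ):ℂ))⁻¹)) * hz15 + ((((13:ℂ) + (8:ℂ)*z + (3:ℂ)*z^2 + (-2:ℂ)*z^3 + (-2:ℂ)*z^4 + (-10:ℂ)*z^5 + (-5:ℂ)*z^6) + (0:ℂ)*Complex.I)*((((Real.sqrt 15:ℝ):ℂ))⁻¹*(((Real.sqrt 15:ℝ):ℂ))⁻¹)) * hPhi + (15:ℂ) * hsq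
  · linear_combination (((4:ℂ) + (-4:ℂ)*z + (-4:ℂ)*z^2 + (1:ℂ)*z^3 + (-4:ℂ)*z^4 + (1:ℂ)*z^6 + (-4:ℂ)*z^7 + (-4:ℂ)*z^8 + (-4:ℂ)*z^11 + (1:ℂ)*z^12 + (-4:ℂ)*z^13 + (-4:ℂ)*z^14 + (3:ℂ)*z^16 + (3:ℂ)*z^17 + (3:ℂ)*z^19 + (1:ℂ)*z^21 + (3:ℂ)*z^22 + (3:ℂ)*z^23 + (1:ℂ)*z^24 + (3:ℂ)*z^26 + (3:ℂ)*z^28 + (3:ℂ)*z^29 + (1:ℂ)*z^33 + (1:ℂ)*z^39 + (1:ℂ)*z^42)*((((Real.sqrt 15:ℝ):ℂ))⁻¹*(((Real.sqrt 15:ℝ):ℂ))⁻¹)) * hI + ((((8:ℂ) + (-5:ℂ)*z + (-14:ℂ)*z^2 + (7:ℂ)*z^3 + (-8:ℂ)*z^4 + (3:ℂ)*z^5 + (6:ℂ)*z^6 + (-5:ℂ)*z^7 + (-8:ℂ)*z^8 + (2:ℂ)*z^9 + (3:ℂ)*z^10 + (-5:ℂ)*z^11 + (6:ℂ)*z^12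 + (-5:ℂ)*z^13 + (-14:ℂ)*z^14 + (-64:ℂ)*z^15 + (7:ℂ)*z^16 + (25:ℂ)*z^17 + (2:ℂ)*z^18 + (25:ℂ)*z^19 + (2:ℂ)*z^20 + (6:ℂ)*z^21 + (1:ℂ)*z^22 + (25:ℂ)*z^23 + (6:ℂ)*z^24 + (3:ℂ)*z^25 + (1:ℂ)*z^26 + (1:ℂ)*z^27 + (7:ℂ)*z^28 + (25:ℂ)*z^29 + (80:ℂ)*z^30 + (15:ℂ)*z^31 + (6:ℂ)*z^32 + (7:ℂ)*z^33 + (1:ℂ)*z^35 + (1:ℂ)*z^36 + (15:ℂ)*z^37 + (6:ℂ)*z^39 + (2:ℂ)*z^40 + (15:ℂ)*z^41 + (5:ℂ)*z^42 + (15:ℂ)*z^43 + (6:ℂ)*z^44 + (1:ℂ)*z^48 + (1:ℂ)*z^50 + (1:ℂ)*z^51 + (6:ℂ)*z^52 + (1:ℂ)*z^54 + (1:ℂ)*z^55 + (6:ℂ)*z^56 + (1:ℂ)*z^63 + (1:ℂ)*z^69) + ((16:ℂ) + (-13:ℂ)*z^2 + (9:ℂ)*z^3 + (-6:ℂ)*z^4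 + (3:ℂ)*z^5 + (8:ℂ)*z^6 + (-6:ℂ)*z^8 + (6:ℂ)*z^9 + (3:ℂ)*z^10 + (8:ℂ)*z^12 + (-13:ℂ)*z^14 + (-88:ℂ)*z^15 + (3:ℂ)*z^16 + (24:ℂ)*z^17 + (4:ℂ)*z^18 + (25:ℂ)*z^19 + (2:ℂ)*z^20 + (6:ℂ)*z^21 + (-4:ℂ)*z^22 + (25:ℂ)*z^23 + (8:ℂ)*z^24 + (3:ℂ)*z^25 + (-4:ℂ)*z^26 + (3:ℂ)*z^27 + (3:ℂ)*z^28 + (24:ℂ)*z^29 + (80:ℂ)*z^30 + (15:ℂ)*z^31 + (6:ℂ)*z^32 + (7:ℂ)*z^33 + (1:ℂ)*z^35 + (1:ℂ)*z^36 + (14:ℂ)*z^37 + (6:ℂ)*z^39 + (2:ℂ)*z^40 + (14:ℂ)*z^41 + (5:ℂ)*z^42 + (15:ℂ)*z^43 + (6:ℂ)*z^44 + (1:ℂ)*z^48 + (1:ℂ)*z^50 + (1:ℂ)*z^51 + (6:ℂ)*z^52 + (1:ℂ)*z^54 + (1:ℂ)*z^55 + (6:ℂ)*z^56 + (1:ℂ)*z^63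 + (1:ℂ)*z^69)*Complex.I)*((((Real.sqrt 15:ℝ):ℂ))⁻¹*(((Real.sqrt 15:ℝ):ℂ))⁻¹)) * hz15 + ((((4:ℂ) + (6:ℂ)*z + (8:ℂ)*z^2 + (6:ℂ)*z^3 + (6:ℂ)*z^4 + (4:ℂ)*z^5 + (2:ℂ)*z^6) + ((12:ℂ) + (10:ℂ)*z + (8:ℂ)*z^2 + (2:ℂ)*z^3 + (2:ℂ)*z^4 + (-4:ℂ)*z^5 + (-2:ℂ)*z^6)*Complex.I)*((((Real.sqrt 15:ℝ):ℂ))⁻¹*(((Real.sqrt 15:ℝ):ℂ))⁻¹)) * hPhi + (0:ℂ) * hsq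
  · linear_combination (((12:ℂ) + (-1:ℂ)*z^2 + (-1:ℂ)*z^4 + (-1:ℂ)*z^8 + (-1:ℂ)*z^14 + (-8:ℂ)*z^15 + (-1:ℂ)*z^16 + (-1:ℂ)*z^22 + (-1:ℂ)*z^26 + (-1:ℂ)*z^28)*((((Real.sqrt 15:ℝ):ℂ))⁻¹*(((Real.sqrt 15:ℝ):ℂ))⁻¹)) * hI + ((((16:ℂ) + (5:ℂ)*z + (3:ℂ)*z^2 + (1:ℂ)*z^3 + (3:ℂ)*z^4 + (1:ℂ)*z^6 + (5:ℂ)*z^7 + (3:ℂ)*z^8 + (2:ℂ)*z^9 + (5:ℂ)*z^11 + (1:ℂ)*z^12 + (5:ℂ)*z^13 + (3:ℂ)*z^14 + (1:ℂ)*z^18 + (1:ℂ)*z^24 + (1:ℂ)*z^27) + ((-8:ℂ) + (-7:ℂ)*z + (-3:ℂ)*z^2 + (4:ℂ)*z^3 + (-4:ℂ)*z^4 + (3:ℂ)*z^5 + (4:ℂ)*z^6 + (-7:ℂ)*z^7 + (-4:ℂ)*z^8 + (-2:ℂ)*z^9 + (3:ℂ)*z^10 + (-7:ℂ)*z^11 +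 (4:ℂ)*z^12 + (-7:ℂ)*z^13 + (-3:ℂ)*z^14 + (24:ℂ)*z^15 + (14:ℂ)*z^16 + (11:ℂ)*z^17 + (-1:ℂ)*z^18 + (10:ℂ)*z^19 + (2:ℂ)*z^20 + (5:ℂ)*z^21 + (15:ℂ)*z^22 + (10:ℂ)*z^23 + (4:ℂ)*z^24 + (3:ℂ)*z^25 + (15:ℂ)*z^26 + (-1:ℂ)*z^27 + (14:ℂ)*z^28 + (11:ℂ)*z^29 + (5:ℂ)*z^33 + (1:ℂ)*z^35 + (1:ℂ)*z^37 + (5:ℂ)*z^39 + (2:ℂ)*z^40 + (1:ℂ)*z^41 + (5:ℂ)*z^42 + (1:ℂ)*z^50 + (1:ℂ)*z^55)*Complex.I)*((((Real.sqrt 15:ℝ):ℂ))⁻¹*(((Real.sqrt 15:ℝ):ℂ))⁻¹)) * hz15 + ((((2:ℂ)*z + (4:ℂ)*z^2 + (6:ℂ)*z^3 + (6:ℂ)*z^4 + (4:ℂ)*z^5 + (2:ℂ)*z^6) + ((2:ℂ)*z + (4:ℂ)*z^2 + (2:ℂ)*z^3 + (2:ℂ)*z^4 + (4:ℂ)*z^5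 + (2:ℂ)*z^6)*Complex.I)*((((Real.sqrt 15:ℝ):ℂ))⁻¹*(((Real.sqrt 15:ℝ):ℂ))⁻¹)) * hPhi + (0:ℂ) * hsq
  · linear_combination (((3:ℂ)*z + (3:ℂ)*z^2 + (-1:ℂ)*z^3 + (3:ℂ)*z^4 + (-1:ℂ)*z^6 + (3:ℂ)*z^7 + (3:ℂ)*z^8 + (3:ℂ)*z^11 + (-1:ℂ)*z^12 + (3:ℂ)*z^13 + (3:ℂ)*z^14 + (-3:ℂ)*z^16 + (-3:ℂ)*z^17 + (-3:ℂ)*z^19 + (-1:ℂ)*z^21 + (-3:ℂ)*z^22 + (-3:ℂ)*z^23 + (-1:ℂ)*z^24 + (-3:ℂ)*z^26 + (-3:ℂ)*z^28 + (-3:ℂ)*z^29 + (-1:ℂ)*z^33 + (-1:ℂ)*z^39 + (-1:ℂ)*z^42)*((((Real.sqrt 15:ℝ):ℂ))⁻¹*(((Real.sqrt 15:ℝ):ℂ))⁻¹)) * hI + ((((8:ℂ)*z + (11:ℂ)*z^2 + (2:ℂ)*z^3 + (10:ℂ)*z^4 + (2:ℂ)*z^6 + (8:ℂ)*z^7 +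 (10:ℂ)*z^8 + (4:ℂ)*z^9 + (8:ℂ)*z^11 + (2:ℂ)*z^12 + (8:ℂ)*z^13 + (11:ℂ)*z^14 + (24:ℂ)*z^15 + (4:ℂ)*z^16 + (1:ℂ)*z^17 + (2:ℂ)*z^18 + (5:ℂ)*z^22 + (2:ℂ)*z^24 + (5:ℂ)*z^26 + (2:ℂ)*z^27 + (4:ℂ)*z^28 + (1:ℂ)*z^29 + (1:ℂ)*z^37 + (1:ℂ)*z^41) + ((8:ℂ) + (-2:ℂ)*z + (-11:ℂ)*z^2 + (8:ℂ)*z^3 + (-5:ℂ)*z^4 + (3:ℂ)*z^5 + (7:ℂ)*z^6 + (-2:ℂ)*z^7 + (-5:ℂ)*z^8 + (4:ℂ)*z^9 + (3:ℂ)*z^10 + (-2:ℂ)*z^11 + (7:ℂ)*z^12 + (-2:ℂ)*z^13 + (-11:ℂ)*z^14 + (-64:ℂ)*z^15 + (7:ℂ)*z^16 + (25:ℂ)*z^17 + (3:ℂ)*z^18 + (25:ℂ)*z^19 + (2:ℂ)*z^20 + (6:ℂ)*z^21 + (1:ℂ)*z^22 + (25:ℂ)*z^23 + (7:ℂ)*z^24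 + (3:ℂ)*z^25 + (1:ℂ)*z^26 + (2:ℂ)*z^27 + (7:ℂ)*z^28 + (25:ℂ)*z^29 + (80:ℂ)*z^30 + (15:ℂ)*z^31 + (6:ℂ)*z^32 + (7:ℂ)*z^33 + (1:ℂ)*z^35 + (1:ℂ)*z^36 + (15:ℂ)*z^37 + (6:ℂ)*z^39 + (2:ℂ)*z^40 + (15:ℂ)*z^41 + (5:ℂ)*z^42 + (15:ℂ)*z^43 + (6:ℂ)*z^44 + (1:ℂ)*z^48 + (1:ℂ)*z^50 + (1:ℂ)*z^51 + (6:ℂ)*z^52 + (1:ℂ)*z^54 + (1:ℂ)*z^55 + (6:ℂ)*z^56 + (1:ℂ)*z^63 + (1:ℂ)*z^69)*Complex.I)*((((Real.sqrt 15:ℝ):ℂ))⁻¹*(((Real.sqrt 15:ℝ):ℂ))⁻¹)) * hz15 + ((((4:ℂ)*z + (8:ℂ)*z^2 + (12:ℂ)*z^3 + (12:ℂ)*z^4 + (8:ℂ)*z^5 + (4:ℂ)*z^6) + ((8:ℂ) + (8:ℂ)*z + (8:ℂ)*z^2 + (4:ℂ)*z^3 + (4:ℂ)*z^4)*Complex.I)*((((Real.sqrt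 15:ℝ):ℂ))⁻¹*(((Real.sqrt 15:ℝ):ℂ))⁻¹)) * hPhi + (0:ℂ) * hsq
  · linear_combination (((4:ℂ) + (-4:ℂ)*z + (-4:ℂ)*z^2 + (1:ℂ)*z^3 + (-4:ℂ)*z^4 + (1:ℂ)*z^6 + (-4:ℂ)*z^7 + (-4:ℂ)*z^8 + (-4:ℂ)*z^11 + (1:ℂ)*z^12 + (-4:ℂ)*z^13 + (-4:ℂ)*z^14 + (3:ℂ)*z^16 + (3:ℂ)*z^17 + (3:ℂ)*z^19 + (1:ℂ)*z^21 + (3:ℂ)*z^22 + (3:ℂ)*z^23 + (1:ℂ)*z^24 + (3:ℂ)*z^26 + (3:ℂ)*z^28 + (3:ℂ)*z^29 + (1:ℂ)*z^33 + (1:ℂ)*z^39 + (1:ℂ)*z^42)*((((Real.sqrt 15:ℝ):ℂ))⁻¹*(((Real.sqrt 15:ℝ):ℂ))⁻¹)) * hI + ((((8:ℂ) + (-5:ℂ)*z + (-14:ℂ)*z^2 + (7:ℂ)*z^3 + (-8:ℂ)*z^4 + (3:ℂ)*z^5 + (6:ℂ)*z^6 + (-5:ℂ)*z^7 + (-8:ℂ)*z^8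 + (2:ℂ)*z^9 + (3:ℂ)*z^10 + (-5:ℂ)*z^11 + (6:ℂ)*z^12 + (-5:ℂ)*z^13 + (-14:ℂ)*z^14 + (-64:ℂ)*z^15 + (7:ℂ)*z^16 + (25:ℂ)*z^17 + (2:ℂ)*z^18 + (25:ℂ)*z^19 + (2:ℂ)*z^20 + (6:ℂ)*z^21 + (1:ℂ)*z^22 + (25:ℂ)*z^23 + (6:ℂ)*z^24 + (3:ℂ)*z^25 + (1:ℂ)*z^26 + (1:ℂ)*z^27 + (7:ℂ)*z^28 + (25:ℂ)*z^29 + (80:ℂ)*z^30 + (15:ℂ)*z^31 + (6:ℂ)*z^32 + (7:ℂ)*z^33 + (1:ℂ)*z^35 + (1:ℂ)*z^36 + (15:ℂ)*z^37 + (6:ℂ)*z^39 + (2:ℂ)*z^40 + (15:ℂ)*z^41 + (5:ℂ)*z^42 + (15:ℂ)*z^43 + (6:ℂ)*z^44 + (1:ℂ)*z^48 + (1:ℂ)*z^50 + (1:ℂ)*z^51 + (6:ℂ)*z^52 + (1:ℂ)*z^54 + (1:ℂ)*z^55 + (6:ℂ)*z^56 + (1:ℂ)*z^63 + (1:ℂ)*z^69)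 + ((-16:ℂ) + (13:ℂ)*z^2 + (-9:ℂ)*z^3 + (6:ℂ)*z^4 + (-3:ℂ)*z^5 + (-8:ℂ)*z^6 + (6:ℂ)*z^8 + (-6:ℂ)*z^9 + (-3:ℂ)*z^10 + (-8:ℂ)*z^12 + (13:ℂ)*z^14 + (88:ℂ)*z^15 + (-3:ℂ)*z^16 + (-24:ℂ)*z^17 + (-4:ℂ)*z^18 + (-25:ℂ)*z^19 + (-2:ℂ)*z^20 + (-6:ℂ)*z^21 + (4:ℂ)*z^22 + (-25:ℂ)*z^23 + (-8:ℂ)*z^24 + (-3:ℂ)*z^25 + (4:ℂ)*z^26 + (-3:ℂ)*z^27 + (-3:ℂ)*z^28 + (-24:ℂ)*z^29 + (-80:ℂ)*z^30 + (-15:ℂ)*z^31 + (-6:ℂ)*z^32 + (-7:ℂ)*z^33 + (-1:ℂ)*z^35 + (-1:ℂ)*z^36 + (-14:ℂ)*z^37 + (-6:ℂ)*z^39 + (-2:ℂ)*z^40 + (-14:ℂ)*z^41 + (-5:ℂ)*z^42 + (-15:ℂ)*z^43 + (-6:ℂ)*z^44 + (-1:ℂ)*z^48 + (-1:ℂ)*z^50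 + (-1:ℂ)*z^51 + (-6:ℂ)*z^52 + (-1:ℂ)*z^54 + (-1:ℂ)*z^55 + (-6:ℂ)*z^56 + (-1:ℂ)*z^63 + (-1:ℂ)*z^69)*Complex.I)*((((Real.sqrt 15:ℝ):ℂ))⁻¹*(((Real.sqrt 15:ℝ):ℂ))⁻¹)) * hz15 + ((((4:ℂ) + (6:ℂ)*z + (8:ℂ)*z^2 + (6:ℂ)*z^3 + (6:ℂ)*z^4 + (4:ℂ)*z^5 + (2:ℂ)*z^6) + ((-12:ℂ) + (-10:ℂ)*z + (-8:ℂ)*z^2 + (-2:ℂ)*z^3 + (-2:ℂ)*z^4 + (4:ℂ)*z^5 + (2:ℂ)*z^6)*Complex.I)*((((Real.sqrt 15:ℝ):ℂ))⁻¹*(((Real.sqrt 15:ℝ):ℂ))⁻¹)) * hPhi + (0:ℂ) * hsq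
  · linear_combination (((-4:ℂ))*((((Real.sqrt 15:ℝ):ℂ))⁻¹*(((Real.sqrt 15:ℝ):ℂ))⁻¹)) * hI + ((((16:ℂ) + (-1:ℂ)*z + (-8:ℂ)*z^2 + (14:ℂ)*z^3 + (-3:ℂ)*z^4 + (6:ℂ)*z^5 + (13:ℂ)*z^6 + (-1:ℂ)*z^7 + (-3:ℂ)*z^8 + (6:ℂ)*z^9 + (6:ℂ)*z^10 + (-1:ℂ)*z^11 + (13:ℂ)*z^12 + (-1:ℂ)*z^13 + (-8:ℂ)*z^14 + (-40:ℂ)*z^15 + (21:ℂ)*z^16 + (36:ℂ)*z^17 + (4:ℂ)*z^18 + (35:ℂ)*z^19 + (4:ℂ)*z^20 + (11:ℂ)*z^21 + (16:ℂ)*z^22 + (35:ℂ)*z^23 + (13:ℂ)*z^24 + (6:ℂ)*z^25 + (16:ℂ)*z^26 + (3:ℂ)*z^27 + (21:ℂ)*z^28 + (36:ℂ)*z^29 + (80:ℂ)*z^30 + (15:ℂ)*z^31 + (6:ℂ)*z^32 + (12:ℂ)*z^33 + (2:ℂ)*z^35 + (1:ℂ)*z^36 + (16:ℂ)*z^37 +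 (11:ℂ)*z^39 + (4:ℂ)*z^40 + (16:ℂ)*z^41 + (10:ℂ)*z^42 + (15:ℂ)*z^43 + (6:ℂ)*z^44 + (1:ℂ)*z^48 + (2:ℂ)*z^50 + (1:ℂ)*z^51 + (6:ℂ)*z^52 + (1:ℂ)*z^54 + (2:ℂ)*z^55 + (6:ℂ)*z^56 + (1:ℂ)*z^63 + (1:ℂ)*z^69) + (0:ℂ)*Complex.I)*((((Real.sqrt 15:ℝ):ℂ))⁻¹*(((Real.sqrt 15:ℝ):ℂ))⁻¹)) * hz15 + ((((9:ℂ) + (14:ℂ)*z + (19:ℂ)*z^2 + (16:ℂ)*z^3 + (16:ℂ)*z^4 + (10:ℂ)*z^5 + (5:ℂ)*z^6) + (0:ℂ)*Complex.I)*((((Real.sqrt 15:ℝ):ℂ))⁻¹*(((Real.sqrt 15:ℝ):ℂ))⁻¹)) * hPhi + (15:ℂ) * hsq
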